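/- Let N ≥ 1 and θ₀ = (θ₁,…,θ_N) ∈ ℝ^N. Then θ₀ is an equilibrium point of the homogeneous Kuramoto model on the complete graph K_N, i.e. ∑_{j=1}^N sin(θ_j − θ_i) = 0 for every i, if and only if at least one of the following holds: (1) all pairwise differences θ_i − θ_j are integer multiples of π; or (2) ∑_{j=1}^N exp(i θ_j) = 0. -/

import Mathlib

theorem complete_graph_equilibrium_iff (N : ℕ) (hN : 1 ≤ N) (θ : Fin N → ℝ) :
    (∀ i, ∑ j, Real.sin (θ j - θ i) = 0) ↔
      ((∀ i j : Fin N, ∃ m : ℤ, θ i - θ j = m * Real.pi) ∨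
        ∑ j, Complex.exp (Complex.I * θ j) = 0) := by
  set S : ℂ := ∑ j, Complex.exp (Complex.I * θ j) with hS
  have key : ∀ i, ((S * Complex.exp (-(Complex.I * θ i))).im)
      = ∑ j, Real.sin (θ j - θ i) := by
    intro i
    rw [hS, Finset.sum_mul, Complex.im_sum]
    refine Finset.sum_congr rfl fun j _ => ?_
    rw [← Complex.exp_add]
    have : Complex.I * θ j + -(Complex.I * θ i) = ((θ j - θ i : ℝ) : ℂ) * Complex.I := by
      push_cast; ring
    rw [this, Complex.exp_ofReal_mul_I_im]
  constructor
  · intro h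
    by_cases hS0 : S = 0
    · exact Or.inr hS0
    · left
      have habs : (‖S‖ : ℝ) ≠ 0 := norm_ne_zero_iff.mpr hS0
      have harg : ∀ i, ∃ n : ℤ, (n : ℝ) * Real.pi = Complex.arg S - θ i := by
        intro i
        have h1 : (S * Complex.exp (-(Complex.I * θ i))).im = 0 := by
          rw [key i]; exact h i
        have h2 : S = (‖S‖ : ℝ) * Complex.exp (Complex.arg S * Complex.I) :=
          (Complex.norm_mul_exp_arg_mul_I S).symm
        rw [h2, mul_assoc, ← Complex.exp_add] at h1
        have h3 : (Complex.arg S : ℂ) * Complex.I + -(Complex.I * θ i)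
            = ((Complex.arg S - θ i : ℝ) : ℂ) * Complex.I := by push_cast; ring
        rw [h3] at h1
        have h4 : ((‖S‖ : ℝ) : ℂ).im = 0 := Complex.ofReal_im _
        rw [Complex.mul_im, h4, Complex.ofReal_re, Complex.exp_ofReal_mul_I_im,
          zero_mul, add_zero] at h1
        have h5 : Real.sin (Complex.arg S - θ i) = 0 := by
          rcases mul_eq_zero.mp h1 with h | h
          · exact absurd h habs
          · exact h
        exact Real.sin_eq_zero_iff.mp h5
      intro i j
      obtain ⟨n, hn⟩ := harg i
      obtain ⟨m, hm⟩ := harg j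
      exact ⟨m - n, by push_cast; linarith⟩
  · intro h i
    rcases h with h | h
    · refine Finset.sum_eq_zero fun j _ => ?_
      obtain ⟨m, hm⟩ := h j i
      rw [hm, Real.sin_int_mul_pi]
    · rw [← key i, h, zero_mul, Complex.zero_im]
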